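/- Let g be a metric on U and let V be a smooth vector field on U such that the first-order operator D_V f := Σ_ℓ V^ℓ ∂_ℓ f commutes with the Beltrami–Laplace operator Δ_g, i.e., Δ_g(D_V f) = D_V(Δ_g f) for every smooth f : U → ℝ. Then V is a Killing vector field for g: Σ_s V^s ∂_s g_{ij} + Σ_s g_{sj} ∂_i V^s + Σ_s g_{is} ∂_j V^s = 0 at every point of U and for all indices i, j. -/

import Mathlib

open Matrix

noncomputable section

/-- Partial derivative in the `i`-th coordinate direction of a real-valued function on `ℝⁿ`. -/
def pd {n : ℕ} (i : Fin n) (f : (Fin n → ℝ) → ℝ) : (Fin n → ℝ) → ℝ :=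
  fun x => fderiv ℝ f x (Pi.single i 1)

/-- Iterated partial derivatives along a list of coordinate directions. -/
def iterPD {n : ℕ} : List (Fin n) → ((Fin n → ℝ) → ℝ) → ((Fin n → ℝ) → ℝ)
  | [], f => f
  | i :: l, f => pd i (iterPD l f)

/-- `g` is a (pseudo-Riemannian) metric on `U`: a smooth field of invertible symmetric
real `n×n` matrices. -/
structure IsMetricOn {n : ℕ} (U : Set (Fin n → ℝ))
    (g : (Fin n → ℝ) → Matrix (Fin n) (Fin n) ℝ) : Prop where
  smooth : ∀ i j : Fin n, ContDiffOn ℝ (⊤ : ℕ∞) (fun x => g x i j) U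
  symm : ∀ x ∈ U, (g x).IsSymm
  nondeg : ∀ x ∈ U, IsUnit (g x).det

/-- The Christoffel symbols `Γ^k_{ij}` of the metric `g`. -/
def Gamma {n : ℕ} (g : (Fin n → ℝ) → Matrix (Fin n) (Fin n) ℝ)
    (k i j : Fin n) (x : Fin n → ℝ) : ℝ :=
  (1/2) * ∑ ℓ, (g x)⁻¹ k ℓ *
    (pd i (fun y => g y ℓ j) x + pd j (fun y => g y ℓ i) x - pd ℓ (fun y => g y i j) x)

/-- An open interval of `ℝ` (possibly empty or unbounded): an open order-connected set. -/
def IsOpenInterval (I : Set ℝ) : Prop := IsOpen I ∧ I.OrdConnected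

/-- `γ` is a `g`-geodesic defined on the open interval `I`, with values in `U`. -/
structure IsGeodesicOn {n : ℕ} (U : Set (Fin n → ℝ))
    (g : (Fin n → ℝ) → Matrix (Fin n) (Fin n) ℝ)
    (γ : ℝ → (Fin n → ℝ)) (I : Set ℝ) : Prop where
  interval : IsOpenInterval I
  smooth : ∀ k : Fin n, ContDiffOn ℝ (⊤ : ℕ∞) (fun s => γ s k) I
  mem : ∀ t ∈ I, γ t ∈ U
  eqn : ∀ t ∈ I, ∀ k : Fin n,
    deriv (deriv fun s => γ s k) t
      + ∑ i, ∑ j, Gamma g k i j (γ t) * deriv (fun s => γ s i) t * deriv (fun s => γ s j) t = 0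

/-- `g` and `gbar` are projectively equivalent on `U`: every `g`-geodesic with nowhere
vanishing velocity becomes, after a smooth reparameterization (a diffeomorphism of open
intervals), a `gbar`-geodesic. -/
def ProjEquiv {n : ℕ} (U : Set (Fin n → ℝ))
    (g gbar : (Fin n → ℝ) → Matrix (Fin n) (Fin n) ℝ) : Prop :=
  ∀ (γ : ℝ → (Fin n → ℝ)) (I : Set ℝ), IsGeodesicOn U g γ I →
    (∀ t ∈ I, ∃ k, deriv (fun s => γ s k) t ≠ 0) →
    ∃ (φ : ℝ → ℝ) (J : Set ℝ), IsOpenInterval J ∧ ContDiffOn ℝ (⊤ : ℕ∞) φ J ∧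
      Set.InjOn φ J ∧ φ '' J = I ∧ (∀ t ∈ J, deriv φ t ≠ 0) ∧
      IsGeodesicOn U gbar (γ ∘ φ) J

/-- The (1,1)-tensor `L = |det gbar / det g|^{1/(n+1)} gbar⁻¹ g` built from `g` and `gbar`. -/
def Lfield {n : ℕ} (g gbar : (Fin n → ℝ) → Matrix (Fin n) (Fin n) ℝ)
    (x : Fin n → ℝ) : Matrix (Fin n) (Fin n) ℝ :=
  |(gbar x).det / (g x).det| ^ ((1 : ℝ)/((n : ℝ)+1)) • ((gbar x)⁻¹ * g x)

/-- The family `S(t) = adjugate (t·Id − L)`. -/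
def Sfield {n : ℕ} (g gbar : (Fin n → ℝ) → Matrix (Fin n) (Fin n) ℝ) (t : ℝ)
    (x : Fin n → ℝ) : Matrix (Fin n) (Fin n) ℝ :=
  (t • (1 : Matrix (Fin n) (Fin n) ℝ) - Lfield g gbar x).adjugate

/-- The second order operator associated (via Carter's quantization) to a field `A` of
symmetric matrices: `Â f = |det g|^{-1/2} ∑ᵢⱼ ∂ᵢ(|det g|^{1/2} Aⁱʲ ∂ⱼ f)`. -/
def assocOp {n : ℕ} (g A : (Fin n → ℝ) → Matrix (Fin n) (Fin n) ℝ)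
    (f : (Fin n → ℝ) → ℝ) (x : Fin n → ℝ) : ℝ :=
  |(g x).det| ^ (-(1 : ℝ)/2) * ∑ i, ∑ j,
    pd i (fun y => |(g y).det| ^ ((1 : ℝ)/2) * A y i j * pd j f y) x

/-- The operator `K̂^{(t)}`, associated to `A = S(t)·g⁻¹`. -/
def Khat {n : ℕ} (g gbar : (Fin n → ℝ) → Matrix (Fin n) (Fin n) ℝ) (t : ℝ)
    (f : (Fin n → ℝ) → ℝ) (x : Fin n → ℝ) : ℝ :=
  assocOp g (fun y => Sfield g gbar t y * (g y)⁻¹) f x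

/-- The Beltrami-Laplace operator of `g`, associated to `A = g⁻¹`. -/
def LaplaceOp {n : ℕ} (g : (Fin n → ℝ) → Matrix (Fin n) (Fin n) ℝ)
    (f : (Fin n → ℝ) → ℝ) (x : Fin n → ℝ) : ℝ :=
  assocOp g (fun y => (g y)⁻¹) f x

/-- `K` is a Killing tensor for `g` on `U`: the associated quadratic function is constant
along every `g`-geodesic. -/
def IsKillingTensorOn {n : ℕ} (U : Set (Fin n → ℝ))
    (g K : (Fin n → ℝ) → Matrix (Fin n) (Fin n) ℝ) : Prop :=
  ∀ (γ : ℝ → (Fin n → ℝ)) (I : Set ℝ), IsGeodesicOn U g γ I →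
    ∀ τ₁ ∈ I, ∀ τ₂ ∈ I,
      (∑ i, ∑ j, deriv (fun s => γ s i) τ₁ * K (γ τ₁) i j * deriv (fun s => γ s j) τ₁) =
      (∑ i, ∑ j, deriv (fun s => γ s i) τ₂ * K (γ τ₂) i j * deriv (fun s => γ s j) τ₂)

/-- The covariant derivative `∇_k T_{ij}` of a (0,2)-tensor field `T`. -/
def covDeriv2 {n : ℕ} (g T : (Fin n → ℝ) → Matrix (Fin n) (Fin n) ℝ)
    (k i j : Fin n) (x : Fin n → ℝ) : ℝ :=
  pd k (fun y => T y i j) x - (∑ s, Gamma g s k i x * T x s j)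
    - ∑ s, Gamma g s k j x * T x i s

/-- The Ricci curvature tensor `R_{ij}` of `g`. -/
def Ricci {n : ℕ} (g : (Fin n → ℝ) → Matrix (Fin n) (Fin n) ℝ)
    (i j : Fin n) (x : Fin n → ℝ) : ℝ :=
  (∑ ℓ, pd ℓ (fun y => Gamma g ℓ i j y) x) - (∑ ℓ, pd i (fun y => Gamma g ℓ ℓ j y) x)
    + ∑ ℓ, ∑ s, (Gamma g ℓ ℓ s x * Gamma g s i j x - Gamma g ℓ i s x * Gamma g s ℓ j x)

/-- A function vanishes up to order `k` at `p`: it and all its partial derivatives of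
order `≤ k` vanish at `p`. -/
def VanishUpTo {n : ℕ} (k : ℕ) (f : (Fin n → ℝ) → ℝ) (p : Fin n → ℝ) : Prop :=
  ∀ l : List (Fin n), l.length ≤ k → iterPD l f p = 0


/-- The plain (flat) second order operator `Â f = ∑ᵢⱼ ∂ᵢ(Aⁱʲ ∂ⱼ f)` associated to a
matrix field `A`. -/
def opPlain {n : ℕ} (A : (Fin n → ℝ) → Matrix (Fin n) (Fin n) ℝ)
    (f : (Fin n → ℝ) → ℝ) (x : Fin n → ℝ) : ℝ :=
  ∑ i, ∑ j, pd i (fun y => A y i j * pd j f y) x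

end

section KVHelpers

variable {n : ℕ}

private lemma pd_congr_nhds {i : Fin n} {u v : (Fin n → ℝ) → ℝ} {x : Fin n → ℝ}
    (h : u =ᶠ[nhds x] v) : pd i u x = pd i v x := by
  unfold pd; rw [Filter.EventuallyEq.fderiv_eq h]

private lemma pd_mul {i : Fin n} {u v : (Fin n → ℝ) → ℝ} {x : Fin n → ℝ}
    (hu : DifferentiableAt ℝ u x) (hv : DifferentiableAt ℝ v x) :
    pd i (fun y => u y * v y) x = pd i u x * v x + u x * pd i v x := by
  unfold pd; rw [fderiv_fun_mul hu hv]; simp; ring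

private lemma pd_add {i : Fin n} {u v : (Fin n → ℝ) → ℝ} {x : Fin n → ℝ}
    (hu : DifferentiableAt ℝ u x) (hv : DifferentiableAt ℝ v x) :
    pd i (fun y => u y + v y) x = pd i u x + pd i v x := by
  unfold pd; rw [fderiv_fun_add hu hv]; simp

private lemma pd_sum {i : Fin n} {ι : Type*} {s : Finset ι} {F : ι → (Fin n → ℝ) → ℝ}
    {x : Fin n → ℝ} (h : ∀ a ∈ s, DifferentiableAt ℝ (F a) x) :
    pd i (fun y => ∑ a ∈ s, F a y) x = ∑ a ∈ s, pd i (F a) x := by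
  unfold pd; rw [fderiv_fun_sum h]; simp

private lemma pd_const {i : Fin n} {x : Fin n → ℝ} (c : ℝ) :
    pd i (fun _ => c) x = 0 := by
  unfold pd; simp

private lemma diffAt_coord {k : Fin n} {c : ℝ} {x : Fin n → ℝ} :
    DifferentiableAt ℝ (fun y : Fin n → ℝ => y k - c) x := by
  have h1 : DifferentiableAt ℝ (fun y : Fin n → ℝ => y k) x :=
    (differentiable_apply k).differentiableAt
  exact h1.sub_const c

private lemma pd_coord {i k : Fin n} {c : ℝ} {x : Fin n → ℝ} :
    pd i (fun y : Fin n → ℝ => y k - c) x = if k = i then 1 else 0 := by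
  unfold pd
  have : fderiv ℝ (fun y : Fin n → ℝ => y k - c) x = fderiv ℝ (fun y : Fin n → ℝ => y k) x := by
    rw [fderiv_sub_const]
  rw [this]
  have h2 : (fun y : Fin n → ℝ => y k) = fun y => (ContinuousLinearMap.proj (R := ℝ)
      (φ := fun _ : Fin n => ℝ) k) y := rfl
  rw [h2, ContinuousLinearMap.fderiv]
  simp [Pi.single_apply]

private lemma contDiffAt_pd {i : Fin n} {u : (Fin n → ℝ) → ℝ} {x : Fin n → ℝ}
    (h : ContDiffAt ℝ (⊤ : ℕ∞) u x) : ContDiffAt ℝ (⊤ : ℕ∞) (pd i u) x := by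
  have h1 : ContDiffAt ℝ (⊤ : ℕ∞) (fderiv ℝ u) x := h.fderiv_right (by simp)
  exact h1.clm_apply contDiffAt_const

private lemma contDiffAt_det {g : (Fin n → ℝ) → Matrix (Fin n) (Fin n) ℝ} {x : Fin n → ℝ}
    (h : ∀ i j, ContDiffAt ℝ (⊤ : ℕ∞) (fun y => g y i j) x) :
    ContDiffAt ℝ (⊤ : ℕ∞) (fun y => (g y).det) x := by
  simp only [Matrix.det_apply, Units.smul_def, zsmul_eq_mul]
  exact ContDiffAt.sum fun σ _ =>
    contDiffAt_const.mul (contDiffAt_prod fun k _ => h (σ k) k)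

end KVHelpers

section KVAlg

private lemma killing_algebra {n : ℕ} (G A : Matrix (Fin n) (Fin n) ℝ)
    (dG dA : Fin n → Matrix (Fin n) (Fin n) ℝ) (v : Fin n → ℝ)
    (dV : Matrix (Fin n) (Fin n) ℝ)
    (hGA : G * A = 1) (hAG : A * G = 1)
    (hAs : A.IsSymm)
    (hF3 : ∀ ℓ, dG ℓ * A + G * dA ℓ = 0)
    (hstar : ∀ p q, (∑ a, A a q * dV a p) + (∑ a, A a p * dV a q) =
      ∑ ℓ, v ℓ * dA ℓ p q)
    (i j : Fin n) :
    (∑ s, v s * dG s i j) + (∑ s, G s j * dV i s) + (∑ s, G i s * dV j s) = 0 := by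
  have hMN : A * dV + (A * dV)ᵀ = ∑ ℓ, v ℓ • dA ℓ := by
    ext p q
    simp only [Matrix.add_apply, Matrix.transpose_apply, Matrix.mul_apply,
      Matrix.sum_apply, Matrix.smul_apply, smul_eq_mul]
    calc (∑ a, A p a * dV a q) + ∑ a, A q a * dV a p
        = (∑ a, A a q * dV a p) + (∑ a, A a p * dV a q) := by
          rw [add_comm]
          congr 1 <;> exact Finset.sum_congr rfl fun a _ => by rw [hAs.apply]
      _ = ∑ ℓ, v ℓ * dA ℓ p q := hstar p q
  have hGdA : ∀ ℓ, G * dA ℓ * G = -(dG ℓ) := by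
    intro ℓ
    have h1 : G * dA ℓ = -(dG ℓ * A) := eq_neg_of_add_eq_zero_right (hF3 ℓ)
    rw [h1]
    calc -(dG ℓ * A) * G = -(dG ℓ * (A * G)) := by noncomm_ring
      _ = -(dG ℓ) := by rw [hAG, mul_one]
  have hmain : dV * G + G * dVᵀ = -(∑ ℓ, v ℓ • dG ℓ) := by
    calc dV * G + G * dVᵀ
        = G * (A * dV + (A * dV)ᵀ) * G := by
          rw [Matrix.transpose_mul, hAs.eq, mul_add, add_mul]
          rw [show G * (A * dV) = (G * A) * dV from (mul_assoc _ _ _).symm, hGA, one_mul]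
          rw [show G * (dVᵀ * A) * G = G * (dVᵀ * (A * G)) from by noncomm_ring, hAG, mul_one]
      _ = G * (∑ ℓ, v ℓ • dA ℓ) * G := by rw [hMN]
      _ = ∑ ℓ, v ℓ • (G * dA ℓ * G) := by
          rw [Matrix.mul_sum, Matrix.sum_mul]
          exact Finset.sum_congr rfl fun ℓ _ => by
            rw [Matrix.mul_smul, Matrix.smul_mul]
      _ = -(∑ ℓ, v ℓ • dG ℓ) := by
          rw [← Finset.sum_neg_distrib]
          exact Finset.sum_congr rfl fun ℓ _ => by rw [hGdA ℓ, smul_neg]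
  have := congrFun (congrFun hmain i) j
  simp only [Matrix.add_apply, Matrix.mul_apply, Matrix.transpose_apply, Matrix.neg_apply,
    Matrix.sum_apply, Matrix.smul_apply, smul_eq_mul] at this
  have h2 : (∑ s, dV i s * G s j) + ∑ s, G i s * dV j s = -∑ s, v s * dG s i j := this
  calc (∑ s, v s * dG s i j) + (∑ s, G s j * dV i s) + (∑ s, G i s * dV j s)
      = (∑ s, v s * dG s i j) + ((∑ s, dV i s * G s j) + ∑ s, G i s * dV j s) := by
        rw [add_assoc]
        congr 1
        congr 1
        exact Finset.sum_congr rfl fun s _ => mul_comm _ _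
    _ = 0 := by rw [h2]; ring

end KVAlg

section KVSmooth

variable {n : ℕ}

private lemma cdtop_diff {u : (Fin n → ℝ) → ℝ} {x : Fin n → ℝ}
    (h : ContDiffAt ℝ (⊤ : ℕ∞) u x) : DifferentiableAt ℝ u x :=
  h.differentiableAt (by simp)

private lemma contDiffAt_adjugate {g : (Fin n → ℝ) → Matrix (Fin n) (Fin n) ℝ} {x : Fin n → ℝ}
    (h : ∀ i j, ContDiffAt ℝ (⊤ : ℕ∞) (fun y => g y i j) x) (a b : Fin n) :
    ContDiffAt ℝ (⊤ : ℕ∞) (fun y => (g y).adjugate a b) x := by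
  simp only [Matrix.adjugate_apply]
  apply contDiffAt_det (g := fun y => (g y).updateRow b (Pi.single a 1))
  intro p q
  by_cases hp : p = b
  · simp only [Matrix.updateRow_apply, hp, if_pos rfl]
    exact contDiffAt_const
  · simp only [Matrix.updateRow_apply, if_neg hp]
    exact h p q

private lemma contDiffAt_inv_entry {g : (Fin n → ℝ) → Matrix (Fin n) (Fin n) ℝ} {x : Fin n → ℝ}
    (h : ∀ i j, ContDiffAt ℝ (⊤ : ℕ∞) (fun y => g y i j) x) (hdet : (g x).det ≠ 0) (a b : Fin n) :
    ContDiffAt ℝ (⊤ : ℕ∞) (fun y => (g y)⁻¹ a b) x := by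
  have heq : (fun y => (g y)⁻¹ a b) = fun y => ((g y).det)⁻¹ * (g y).adjugate a b := by
    funext y
    rw [Matrix.inv_def]
    simp [Ring.inverse_eq_inv']
  rw [heq]
  exact ((contDiffAt_det h).inv hdet).mul (contDiffAt_adjugate h a b)

private lemma contDiffAt_abs_rpow {d : (Fin n → ℝ) → ℝ} {x : Fin n → ℝ}
    (hd : ContDiffAt ℝ (⊤ : ℕ∞) d x) (hne : d x ≠ 0) (p : ℝ) :
    ContDiffAt ℝ (⊤ : ℕ∞) (fun y => |d y| ^ p) x := by
  have habs : ContDiffAt ℝ (⊤ : ℕ∞) (fun y => |d y|) x := by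
    rcases hne.lt_or_gt with hlt | hlt
    · have hev : (fun y => |d y|) =ᶠ[nhds x] (fun y => -d y) := by
        have hmem : d ⁻¹' Set.Iio 0 ∈ nhds x :=
          hd.continuousAt.preimage_mem_nhds (Iio_mem_nhds hlt)
        exact Filter.eventuallyEq_of_mem hmem fun y hy => abs_of_neg hy
      exact hd.neg.congr_of_eventuallyEq hev
    · have hev : (fun y => |d y|) =ᶠ[nhds x] d := by
        have hmem : d ⁻¹' Set.Ioi 0 ∈ nhds x :=
          hd.continuousAt.preimage_mem_nhds (Ioi_mem_nhds hlt)
        exact Filter.eventuallyEq_of_mem hmem fun y hy => abs_of_pos hy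
      exact hd.congr_of_eventuallyEq hev
  have hrp : ContDiffAt ℝ (⊤ : ℕ∞) (fun t : ℝ => t ^ p) (|d x|) :=
    Real.contDiffAt_rpow_const_of_ne (abs_ne_zero.mpr hne)
  exact hrp.comp x habs

end KVSmooth

set_option maxHeartbeats 1000000 in
theorem first_order_Laplace_commuter_is_Killing_vector {n : ℕ} (hn : 2 ≤ n) (U : Set (Fin n → ℝ)) (hUo : IsOpen U) (hUc : IsConnected U)
    (g : (Fin n → ℝ) → Matrix (Fin n) (Fin n) ℝ) (hg : IsMetricOn U g)
    (V : (Fin n → ℝ) → Fin n → ℝ)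
    (hVs : ∀ ℓ : Fin n, ContDiffOn ℝ (⊤ : ℕ∞) (fun x => V x ℓ) U)
    (hcomm : ∀ f : (Fin n → ℝ) → ℝ, ContDiffOn ℝ (⊤ : ℕ∞) f U → ∀ x ∈ U,
      LaplaceOp g (fun y => ∑ ℓ, V y ℓ * pd ℓ f y) x =
        ∑ ℓ, V x ℓ * pd ℓ (LaplaceOp g f) x) :
    ∀ x ∈ U, ∀ i j : Fin n,
      (∑ s, V x s * pd s (fun y => g y i j) x) +
        (∑ s, g x s j * pd i (fun y => V y s) x) +
        (∑ s, g x i s * pd j (fun y => V y s) x) = 0 := by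
  intro x hx i0 j0
  have hUn : U ∈ nhds x := hUo.mem_nhds hx
  -- smoothness package
  have hgc : ∀ (a b : Fin n), ∀ y ∈ U, ContDiffAt ℝ (⊤ : ℕ∞) (fun z => g z a b) y :=
    fun a b y hy => (hg.smooth a b).contDiffAt (hUo.mem_nhds hy)
  have hdetc : ∀ y ∈ U, ContDiffAt ℝ (⊤ : ℕ∞) (fun z => (g z).det) y :=
    fun y hy => contDiffAt_det (fun a b => hgc a b y hy)
  have hdetne : ∀ y ∈ U, (g y).det ≠ 0 := fun y hy => (hg.nondeg y hy).ne_zero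
  have hAc : ∀ (a b : Fin n), ∀ y ∈ U, ContDiffAt ℝ (⊤ : ℕ∞) (fun z => (g z)⁻¹ a b) y :=
    fun a b y hy => contDiffAt_inv_entry (fun a b => hgc a b y hy) (hdetne y hy) a b
  have hρc : ∀ y ∈ U, ContDiffAt ℝ (⊤ : ℕ∞) (fun z => |(g z).det| ^ ((1:ℝ)/2)) y :=
    fun y hy => contDiffAt_abs_rpow (hdetc y hy) (hdetne y hy) _
  have hρne : ∀ y ∈ U, |(g y).det| ^ ((1:ℝ)/2) ≠ 0 := fun y hy =>
    (Real.rpow_pos_of_pos (abs_pos.mpr (hdetne y hy)) _).ne'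
  have hVc : ∀ (ℓ : Fin n), ∀ y ∈ U, ContDiffAt ℝ (⊤ : ℕ∞) (fun z => V z ℓ) y :=
    fun ℓ y hy => (hVs ℓ).contDiffAt (hUo.mem_nhds hy)
  have hσρ : ∀ y, |(g y).det| ^ (-(1:ℝ)/2) = (|(g y).det| ^ ((1:ℝ)/2))⁻¹ := by
    intro y
    rw [show (-(1:ℝ)/2) = -((1:ℝ)/2) by ring, Real.rpow_neg (abs_nonneg _)]
  -- symmetry facts
  have hAsym : ∀ y ∈ U, ((g y)⁻¹).IsSymm := by
    intro y hy
    unfold Matrix.IsSymm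
    rw [Matrix.transpose_nonsing_inv, (hg.symm y hy).eq]
  -- the inverse relation, entrywise, as functions on U
  have hgA : ∀ y ∈ U, ∀ p q : Fin n,
      (∑ s, g y p s * (g y)⁻¹ s q) = if p = q then 1 else 0 := by
    intro y hy p q
    have h1 : g y * (g y)⁻¹ = 1 := Matrix.mul_nonsing_inv _ (hg.nondeg y hy)
    have h2 := congrFun (congrFun h1 p) q
    simpa [Matrix.mul_apply, Matrix.one_apply] using h2
  -- the key identity coming from the commutation hypothesis
  have hstar : ∀ p q : Fin n,
      (∑ a, (g x)⁻¹ a q * pd a (fun z => V z p) x) +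
        (∑ a, (g x)⁻¹ a p * pd a (fun z => V z q) x) =
      ∑ ℓ, V x ℓ * pd ℓ (fun z => (g z)⁻¹ p q) x := by
    intro i j
    have hfC : ContDiffOn ℝ (⊤ : ℕ∞) (fun y : Fin n → ℝ => (y i - x i) * (y j - x j)) U := by
      apply ContDiff.contDiffOn
      have h1 : ContDiff ℝ (⊤:ℕ∞) (fun y : Fin n → ℝ => y i) :=
        (ContinuousLinearMap.proj i : (Fin n → ℝ) →L[ℝ] ℝ).contDiff
      have h2 : ContDiff ℝ (⊤:ℕ∞) (fun y : Fin n → ℝ => y j) :=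
        (ContinuousLinearMap.proj j : (Fin n → ℝ) →L[ℝ] ℝ).contDiff
      exact (h1.sub contDiff_const).mul (h2.sub contDiff_const)
    have hpdf : ∀ (b : Fin n) (y : Fin n → ℝ),
        pd b (fun z : Fin n → ℝ => (z i - x i) * (z j - x j)) y
          = (if i = b then 1 else 0) * (y j - x j) + (y i - x i) * (if j = b then 1 else 0) := by
      intro b y
      rw [pd_mul diffAt_coord diffAt_coord, pd_coord, pd_coord]
    have hDf : (fun y => ∑ ℓ, V y ℓ * pd ℓ (fun z : Fin n → ℝ => (z i - x i) * (z j - x j)) y)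
        = fun y => V y i * (y j - x j) + (y i - x i) * V y j := by
      funext y
      simp only [hpdf, mul_add, mul_ite, ite_mul, mul_one, mul_zero, one_mul, zero_mul,
        Finset.sum_add_distrib, Finset.sum_ite_eq, Finset.mem_univ, if_true]
      ring
    have hw : ∀ b : Fin n, ∀ y ∈ U,
        pd b (fun z => V z i * (z j - x j) + (z i - x i) * V z j) y
          = pd b (fun z => V z i) y * (y j - x j) + V y i * (if j = b then 1 else 0)
            + ((if i = b then 1 else 0) * V y j + (y i - x i) * pd b (fun z => V z j) y) := by
      intro b y hy
      have d1 : DifferentiableAt ℝ (fun z => V z i) y := cdtop_diff (hVc i y hy)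
      have d2 : DifferentiableAt ℝ (fun z => V z j) y := cdtop_diff (hVc j y hy)
      rw [pd_add (d1.fun_mul diffAt_coord) (diffAt_coord.fun_mul d2),
        pd_mul d1 diffAt_coord, pd_mul diffAt_coord d2, pd_coord, pd_coord]
    have hLHSval : LaplaceOp g (fun y => V y i * (y j - x j) + (y i - x i) * V y j) x
        = |(g x).det| ^ (-(1:ℝ)/2) * ∑ a, ∑ b,
          (pd a (fun z => |(g z).det| ^ ((1:ℝ)/2) * (g z)⁻¹ a b) x
              * (V x i * (if j = b then 1 else 0) + (if i = b then 1 else 0) * V x j)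
            + |(g x).det| ^ ((1:ℝ)/2) * (g x)⁻¹ a b *
              (pd b (fun z => V z i) x * (if j = a then 1 else 0)
               + pd a (fun z => V z i) x * (if j = b then 1 else 0)
               + ((if i = b then 1 else 0) * pd a (fun z => V z j) x
                  + (if i = a then 1 else 0) * pd b (fun z => V z j) x))) := by
      simp only [LaplaceOp, assocOp]
      congr 1
      refine Finset.sum_congr rfl fun a _ => Finset.sum_congr rfl fun b _ => ?_
      have hev : (fun y => |(g y).det| ^ ((1:ℝ)/2) * (g y)⁻¹ a b *
          pd b (fun z => V z i * (z j - x j) + (z i - x i) * V z j) y) =ᶠ[nhds x]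
          (fun y => (|(g y).det| ^ ((1:ℝ)/2) * (g y)⁻¹ a b) *
            (pd b (fun z => V z i) y * (y j - x j) + V y i * (if j = b then 1 else 0)
              + ((if i = b then 1 else 0) * V y j
                 + (y i - x i) * pd b (fun z => V z j) y))) :=
        Filter.eventuallyEq_of_mem hUn fun y hy => by rw [hw b y hy]
      rw [pd_congr_nhds hev]
      have d1 : DifferentiableAt ℝ (fun z => V z i) x := cdtop_diff (hVc i x hx)
      have d2 : DifferentiableAt ℝ (fun z => V z j) x := cdtop_diff (hVc j x hx)
      have d3 : DifferentiableAt ℝ (pd b (fun z => V z i)) x :=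
        cdtop_diff (contDiffAt_pd (hVc i x hx))
      have d4 : DifferentiableAt ℝ (pd b (fun z => V z j)) x :=
        cdtop_diff (contDiffAt_pd (hVc j x hx))
      have dρA : DifferentiableAt ℝ (fun y => |(g y).det| ^ ((1:ℝ)/2) * (g y)⁻¹ a b) x :=
        cdtop_diff ((hρc x hx).mul (hAc a b x hx))
      rw [pd_mul dρA (((d3.fun_mul diffAt_coord).fun_add (d1.fun_mul (differentiableAt_const _))).fun_add
        (((differentiableAt_const _).fun_mul d2).fun_add (diffAt_coord.fun_mul d4)))]
      rw [pd_add ((d3.fun_mul diffAt_coord).fun_add (d1.fun_mul (differentiableAt_const _)))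
        (((differentiableAt_const _).fun_mul d2).fun_add (diffAt_coord.fun_mul d4)),
        pd_add (d3.fun_mul diffAt_coord) (d1.fun_mul (differentiableAt_const _)),
        pd_add ((differentiableAt_const _).fun_mul d2) (diffAt_coord.fun_mul d4),
        pd_mul d3 diffAt_coord, pd_mul d1 (differentiableAt_const _),
        pd_mul (differentiableAt_const _) d2, pd_mul diffAt_coord d4,
        pd_coord, pd_coord, pd_const, pd_const]
      simp only [sub_self, mul_zero, zero_mul, add_zero, zero_add, mul_one]
    have hLapf : ∀ y ∈ U, LaplaceOp g (fun z : Fin n → ℝ => (z i - x i) * (z j - x j)) y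
        = |(g y).det| ^ (-(1:ℝ)/2) * ∑ a, ∑ b,
            (pd a (fun z => |(g z).det| ^ ((1:ℝ)/2) * (g z)⁻¹ a b) y
               * ((if i = b then 1 else 0) * (y j - x j) + (y i - x i) * (if j = b then 1 else 0))
             + |(g y).det| ^ ((1:ℝ)/2) * (g y)⁻¹ a b *
               ((if i = b then (1:ℝ) else 0) * (if j = a then 1 else 0)
                 + (if i = a then 1 else 0) * (if j = b then 1 else 0))) := by
      intro y hy
      simp only [LaplaceOp, assocOp]
      congr 1
      refine Finset.sum_congr rfl fun a _ => Finset.sum_congr rfl fun b _ => ?_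
      have hfeq : (fun z => |(g z).det| ^ ((1:ℝ)/2) * (g z)⁻¹ a b *
          pd b (fun w : Fin n → ℝ => (w i - x i) * (w j - x j)) z)
          = fun z => (|(g z).det| ^ ((1:ℝ)/2) * (g z)⁻¹ a b) *
            ((if i = b then 1 else 0) * (z j - x j) + (z i - x i) * (if j = b then 1 else 0)) := by
        funext z; rw [hpdf b z]
      rw [hfeq]
      have dρA : DifferentiableAt ℝ (fun z => |(g z).det| ^ ((1:ℝ)/2) * (g z)⁻¹ a b) y :=
        cdtop_diff ((hρc y hy).mul (hAc a b y hy))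
      rw [pd_mul dρA (((differentiableAt_const _).fun_mul diffAt_coord).fun_add
        (diffAt_coord.fun_mul (differentiableAt_const _))),
        pd_add ((differentiableAt_const _).fun_mul diffAt_coord)
          (diffAt_coord.fun_mul (differentiableAt_const _)),
        pd_mul (differentiableAt_const _) diffAt_coord,
        pd_mul diffAt_coord (differentiableAt_const _)]
      simp only [pd_coord, pd_const]
      ring
    have hRHSl : ∀ ℓ : Fin n,
        pd ℓ (LaplaceOp g (fun z : Fin n → ℝ => (z i - x i) * (z j - x j))) x
        = pd ℓ (fun y => |(g y).det| ^ (-(1:ℝ)/2)) x *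
            (∑ a, ∑ b, |(g x).det| ^ ((1:ℝ)/2) * (g x)⁻¹ a b *
               ((if i = b then (1:ℝ) else 0) * (if j = a then 1 else 0)
                 + (if i = a then 1 else 0) * (if j = b then 1 else 0)))
          + |(g x).det| ^ (-(1:ℝ)/2) *
            (∑ a, ∑ b,
              (pd a (fun z => |(g z).det| ^ ((1:ℝ)/2) * (g z)⁻¹ a b) x *
                 ((if i = b then (1:ℝ) else 0) * (if j = ℓ then 1 else 0)
                   + (if i = ℓ then 1 else 0) * (if j = b then 1 else 0))
               + pd ℓ (fun z => |(g z).det| ^ ((1:ℝ)/2) * (g z)⁻¹ a b) x *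
                 ((if i = b then (1:ℝ) else 0) * (if j = a then 1 else 0)
                   + (if i = a then 1 else 0) * (if j = b then 1 else 0)))) := by
      intro ℓ
      have dσ : DifferentiableAt ℝ (fun y => |(g y).det| ^ (-(1:ℝ)/2)) x :=
        cdtop_diff (contDiffAt_abs_rpow (hdetc x hx) (hdetne x hx) _)
      have dP : ∀ a b : Fin n, DifferentiableAt ℝ
          (pd a (fun z => |(g z).det| ^ ((1:ℝ)/2) * (g z)⁻¹ a b)) x := fun a b =>
        cdtop_diff (contDiffAt_pd ((hρc x hx).mul (hAc a b x hx)))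
      have de : ∀ b : Fin n, DifferentiableAt ℝ (fun y : Fin n → ℝ =>
          (if i = b then (1:ℝ) else 0) * (y j - x j) + (y i - x i) * (if j = b then 1 else 0)) x :=
        fun b => ((differentiableAt_const _).mul diffAt_coord).add
          (diffAt_coord.mul (differentiableAt_const _))
      have dρA : ∀ a b : Fin n, DifferentiableAt ℝ
          (fun z => |(g z).det| ^ ((1:ℝ)/2) * (g z)⁻¹ a b) x := fun a b =>
        cdtop_diff ((hρc x hx).mul (hAc a b x hx))
      have dF : ∀ a b : Fin n, DifferentiableAt ℝ (fun y =>
          pd a (fun z => |(g z).det| ^ ((1:ℝ)/2) * (g z)⁻¹ a b) y *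
            ((if i = b then 1 else 0) * (y j - x j) + (y i - x i) * (if j = b then 1 else 0))
          + |(g y).det| ^ ((1:ℝ)/2) * (g y)⁻¹ a b *
            ((if i = b then (1:ℝ) else 0) * (if j = a then 1 else 0)
              + (if i = a then 1 else 0) * (if j = b then 1 else 0))) x := fun a b =>
        ((dP a b).mul (de b)).add ((dρA a b).mul (differentiableAt_const _))
      have hev : LaplaceOp g (fun z : Fin n → ℝ => (z i - x i) * (z j - x j)) =ᶠ[nhds x]
          (fun y => |(g y).det| ^ (-(1:ℝ)/2) * ∑ a, ∑ b,
            (pd a (fun z => |(g z).det| ^ ((1:ℝ)/2) * (g z)⁻¹ a b) y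
               * ((if i = b then 1 else 0) * (y j - x j) + (y i - x i) * (if j = b then 1 else 0))
             + |(g y).det| ^ ((1:ℝ)/2) * (g y)⁻¹ a b *
               ((if i = b then (1:ℝ) else 0) * (if j = a then 1 else 0)
                 + (if i = a then 1 else 0) * (if j = b then 1 else 0)))) :=
        Filter.eventuallyEq_of_mem hUn fun y hy => hLapf y hy
      rw [pd_congr_nhds hev,
        pd_mul dσ (DifferentiableAt.fun_sum fun a _ => DifferentiableAt.fun_sum fun b _ => dF a b)]
      have hpdS : pd ℓ (fun y => ∑ a, ∑ b,
          (pd a (fun z => |(g z).det| ^ ((1:ℝ)/2) * (g z)⁻¹ a b) y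
             * ((if i = b then 1 else 0) * (y j - x j) + (y i - x i) * (if j = b then 1 else 0))
           + |(g y).det| ^ ((1:ℝ)/2) * (g y)⁻¹ a b *
             ((if i = b then (1:ℝ) else 0) * (if j = a then 1 else 0)
               + (if i = a then 1 else 0) * (if j = b then 1 else 0)))) x
          = ∑ a, ∑ b,
              (pd a (fun z => |(g z).det| ^ ((1:ℝ)/2) * (g z)⁻¹ a b) x *
                 ((if i = b then (1:ℝ) else 0) * (if j = ℓ then 1 else 0)
                   + (if i = ℓ then 1 else 0) * (if j = b then 1 else 0))
               + pd ℓ (fun z => |(g z).det| ^ ((1:ℝ)/2) * (g z)⁻¹ a b) x *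
                 ((if i = b then (1:ℝ) else 0) * (if j = a then 1 else 0)
                   + (if i = a then 1 else 0) * (if j = b then 1 else 0))) := by
        rw [pd_sum fun a _ => DifferentiableAt.fun_sum fun b _ => dF a b]
        refine Finset.sum_congr rfl fun a _ => ?_
        rw [pd_sum fun b _ => dF a b]
        refine Finset.sum_congr rfl fun b _ => ?_
        rw [pd_add ((dP a b).fun_mul (de b)) ((dρA a b).fun_mul (differentiableAt_const _)),
            pd_mul (dP a b) (de b), pd_mul (dρA a b) (differentiableAt_const _),
            pd_add ((differentiableAt_const _).fun_mul diffAt_coord)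
              (diffAt_coord.fun_mul (differentiableAt_const _)),
            pd_mul (differentiableAt_const _) diffAt_coord,
            pd_mul diffAt_coord (differentiableAt_const _)]
        simp only [pd_coord, pd_const, sub_self, mul_zero, zero_mul, add_zero, zero_add, mul_one]
      rw [hpdS]
      have hSx : (∑ a, ∑ b : Fin n,
          (pd a (fun z => |(g z).det| ^ ((1:ℝ)/2) * (g z)⁻¹ a b) x
             * ((if i = b then 1 else 0) * (x j - x j) + (x i - x i) * (if j = b then 1 else 0))
           + |(g x).det| ^ ((1:ℝ)/2) * (g x)⁻¹ a b *
             ((if i = b then (1:ℝ) else 0) * (if j = a then 1 else 0)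
               + (if i = a then 1 else 0) * (if j = b then 1 else 0))))
          = ∑ a, ∑ b : Fin n, |(g x).det| ^ ((1:ℝ)/2) * (g x)⁻¹ a b *
             ((if i = b then (1:ℝ) else 0) * (if j = a then 1 else 0)
               + (if i = a then 1 else 0) * (if j = b then 1 else 0)) := by
        refine Finset.sum_congr rfl fun a _ => Finset.sum_congr rfl fun b _ => ?_
        simp [sub_self]
      rw [hSx]
    have hρdx : DifferentiableAt ℝ (fun y => |(g y).det| ^ ((1:ℝ)/2)) x := cdtop_diff (hρc x hx)
    have hpdσ : ∀ ℓ : Fin n, pd ℓ (fun y => |(g y).det| ^ (-(1:ℝ)/2)) x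
        = -((|(g x).det| ^ ((1:ℝ)/2))⁻¹ * (|(g x).det| ^ ((1:ℝ)/2))⁻¹ *
            pd ℓ (fun y => |(g y).det| ^ ((1:ℝ)/2)) x) := by
      intro ℓ
      have hσfun : (fun y => |(g y).det| ^ (-(1:ℝ)/2))
          = fun y => (|(g y).det| ^ ((1:ℝ)/2))⁻¹ := funext hσρ
      rw [hσfun]
      have hdinv : DifferentiableAt ℝ (fun y => (|(g y).det| ^ ((1:ℝ)/2))⁻¹) x :=
        hρdx.inv (hρne x hx)
      have h0 : pd ℓ (fun y => |(g y).det| ^ ((1:ℝ)/2) * (|(g y).det| ^ ((1:ℝ)/2))⁻¹) x = 0 := by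
        rw [pd_congr_nhds (Filter.eventuallyEq_of_mem hUn fun y hy =>
          mul_inv_cancel₀ (hρne y hy)), pd_const]
      rw [pd_mul hρdx hdinv] at h0
      have h1 : |(g x).det| ^ ((1:ℝ)/2) * pd ℓ (fun y => (|(g y).det| ^ ((1:ℝ)/2))⁻¹) x
          = -(pd ℓ (fun y => |(g y).det| ^ ((1:ℝ)/2)) x * (|(g x).det| ^ ((1:ℝ)/2))⁻¹) :=
        eq_neg_of_add_eq_zero_right h0
      have hne := hρne x hx
      calc pd ℓ (fun y => (|(g y).det| ^ ((1:ℝ)/2))⁻¹) x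
          = (|(g x).det| ^ ((1:ℝ)/2))⁻¹ * (|(g x).det| ^ ((1:ℝ)/2) *
              pd ℓ (fun y => (|(g y).det| ^ ((1:ℝ)/2))⁻¹) x) := by
            field_simp
        _ = (|(g x).det| ^ ((1:ℝ)/2))⁻¹ *
              -(pd ℓ (fun y => |(g y).det| ^ ((1:ℝ)/2)) x * (|(g x).det| ^ ((1:ℝ)/2))⁻¹) := by
            rw [h1]
        _ = -((|(g x).det| ^ ((1:ℝ)/2))⁻¹ * (|(g x).det| ^ ((1:ℝ)/2))⁻¹ *
              pd ℓ (fun y => |(g y).det| ^ ((1:ℝ)/2)) x) := by ring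
    have heq := hcomm (fun z : Fin n → ℝ => (z i - x i) * (z j - x j)) hfC x hx
    rw [hDf, hLHSval] at heq
    have hR : (∑ ℓ, V x ℓ *
          pd ℓ (LaplaceOp g (fun z : Fin n → ℝ => (z i - x i) * (z j - x j))) x)
        = ∑ ℓ, V x ℓ *
          (-((|(g x).det| ^ ((1:ℝ)/2))⁻¹ * (|(g x).det| ^ ((1:ℝ)/2))⁻¹ *
            pd ℓ (fun y => |(g y).det| ^ ((1:ℝ)/2)) x) *
            (∑ a, ∑ b, |(g x).det| ^ ((1:ℝ)/2) * (g x)⁻¹ a b *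
               ((if i = b then (1:ℝ) else 0) * (if j = a then 1 else 0)
                 + (if i = a then 1 else 0) * (if j = b then 1 else 0)))
          + |(g x).det| ^ (-(1:ℝ)/2) *
            (∑ a, ∑ b,
              (pd a (fun z => |(g z).det| ^ ((1:ℝ)/2) * (g z)⁻¹ a b) x *
                 ((if i = b then (1:ℝ) else 0) * (if j = ℓ then 1 else 0)
                   + (if i = ℓ then 1 else 0) * (if j = b then 1 else 0))
               + (pd ℓ (fun z => |(g z).det| ^ ((1:ℝ)/2)) x * (g x)⁻¹ a b
                    + |(g x).det| ^ ((1:ℝ)/2) * pd ℓ (fun z => (g z)⁻¹ a b) x) *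
                 ((if i = b then (1:ℝ) else 0) * (if j = a then 1 else 0)
                   + (if i = a then 1 else 0) * (if j = b then 1 else 0))))) := by
      refine Finset.sum_congr rfl fun ℓ _ => ?_
      rw [hRHSl ℓ, hpdσ ℓ]
      congr 1
      congr 1
      congr 1
      refine Finset.sum_congr rfl fun a _ => Finset.sum_congr rfl fun b _ => ?_
      rw [pd_mul (i := ℓ) (cdtop_diff (hρc x hx)) (cdtop_diff (hAc a b x hx))]
    rw [hR] at heq
    simp only [hσρ, mul_add, add_mul, mul_ite, ite_mul, mul_one, mul_zero, one_mul, zero_mul,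
      mul_neg, neg_mul, Finset.sum_add_distrib, Finset.sum_ite_eq, Finset.mem_univ, if_true,
      Finset.sum_neg_distrib, add_zero, zero_add, Finset.sum_const_zero, Finset.sum_ite_irrel,
      ← Finset.sum_mul, ← Finset.mul_sum] at heq
    -- symmetry and cancellation facts
    have haentryU : ∀ y ∈ U, ∀ p q : Fin n, (g y)⁻¹ p q = (g y)⁻¹ q p := by
      intro y hy p q
      have h := hAsym y hy
      have h2 := congrFun (congrFun h p) q
      simpa [Matrix.transpose_apply] using h2.symm
    have haentry : ∀ p q : Fin n, (g x)⁻¹ p q = (g x)⁻¹ q p := haentryU x hx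
    have hpdAsym : ∀ ℓ : Fin n, pd ℓ (fun z => (g z)⁻¹ j i) x
        = pd ℓ (fun z => (g z)⁻¹ i j) x :=
      fun ℓ => pd_congr_nhds (Filter.eventuallyEq_of_mem hUn fun y hy => haentryU y hy j i)
    have hcr : (|(g x).det| ^ ((1:ℝ)/2))⁻¹ * |(g x).det| ^ ((1:ℝ)/2) = 1 :=
      inv_mul_cancel₀ (hρne x hx)
    have hccr : (|(g x).det| ^ ((1:ℝ)/2))⁻¹ * (|(g x).det| ^ ((1:ℝ)/2))⁻¹ *
        |(g x).det| ^ ((1:ℝ)/2) = (|(g x).det| ^ ((1:ℝ)/2))⁻¹ := by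
      rw [mul_assoc, hcr, mul_one]
    have eA1 : (∑ s : Fin n, |(g x).det| ^ ((1:ℝ)/2) * (g x)⁻¹ j s * pd s (fun z => V z i) x)
        = |(g x).det| ^ ((1:ℝ)/2) * ∑ s : Fin n, (g x)⁻¹ s j * pd s (fun z => V z i) x := by
      rw [Finset.mul_sum]
      refine Finset.sum_congr rfl fun s _ => ?_
      rw [haentry j s]; ring
    have eA2 : (∑ s : Fin n, |(g x).det| ^ ((1:ℝ)/2) * (g x)⁻¹ s j * pd s (fun z => V z i) x)
        = |(g x).det| ^ ((1:ℝ)/2) * ∑ s : Fin n, (g x)⁻¹ s j * pd s (fun z => V z i) x := by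
      rw [Finset.mul_sum]
      exact Finset.sum_congr rfl fun s _ => by ring
    have eA3 : (∑ s : Fin n, |(g x).det| ^ ((1:ℝ)/2) * (g x)⁻¹ s i * pd s (fun z => V z j) x)
        = |(g x).det| ^ ((1:ℝ)/2) * ∑ s : Fin n, (g x)⁻¹ s i * pd s (fun z => V z j) x := by
      rw [Finset.mul_sum]
      exact Finset.sum_congr rfl fun s _ => by ring
    have eA4 : (∑ s : Fin n, |(g x).det| ^ ((1:ℝ)/2) * (g x)⁻¹ i s * pd s (fun z => V z j) x)
        = |(g x).det| ^ ((1:ℝ)/2) * ∑ s : Fin n, (g x)⁻¹ s i * pd s (fun z => V z j) x := by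
      rw [Finset.mul_sum]
      refine Finset.sum_congr rfl fun s _ => ?_
      rw [haentry i s]; ring
    have eF1 : (∑ s : Fin n, V x s * ((|(g x).det| ^ ((1:ℝ)/2))⁻¹ * (|(g x).det| ^ ((1:ℝ)/2))⁻¹ *
          pd s (fun y => |(g y).det| ^ ((1:ℝ)/2)) x * (|(g x).det| ^ ((1:ℝ)/2) * (g x)⁻¹ j i)))
        = (|(g x).det| ^ ((1:ℝ)/2))⁻¹ * ((g x)⁻¹ i j *
            ∑ s : Fin n, V x s * pd s (fun y => |(g y).det| ^ ((1:ℝ)/2)) x) := by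
      rw [Finset.mul_sum, Finset.mul_sum]
      refine Finset.sum_congr rfl fun s _ => ?_
      rw [haentry j i]
      linear_combination (V x s * pd s (fun y => |(g y).det| ^ ((1:ℝ)/2)) x * (g x)⁻¹ i j) * hccr
    have eF2 : (∑ s : Fin n, V x s * ((|(g x).det| ^ ((1:ℝ)/2))⁻¹ * (|(g x).det| ^ ((1:ℝ)/2))⁻¹ *
          pd s (fun y => |(g y).det| ^ ((1:ℝ)/2)) x * (|(g x).det| ^ ((1:ℝ)/2) * (g x)⁻¹ i j)))
        = (|(g x).det| ^ ((1:ℝ)/2))⁻¹ * ((g x)⁻¹ i j *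
            ∑ s : Fin n, V x s * pd s (fun y => |(g y).det| ^ ((1:ℝ)/2)) x) := by
      rw [Finset.mul_sum, Finset.mul_sum]
      refine Finset.sum_congr rfl fun s _ => ?_
      linear_combination (V x s * pd s (fun y => |(g y).det| ^ ((1:ℝ)/2)) x * (g x)⁻¹ i j) * hccr
    have eF3 : (∑ s : Fin n, V x s * ((|(g x).det| ^ ((1:ℝ)/2))⁻¹ *
          (pd s (fun y => |(g y).det| ^ ((1:ℝ)/2)) x * (g x)⁻¹ j i)))
        = (|(g x).det| ^ ((1:ℝ)/2))⁻¹ * ((g x)⁻¹ i j *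
            ∑ s : Fin n, V x s * pd s (fun y => |(g y).det| ^ ((1:ℝ)/2)) x) := by
      rw [Finset.mul_sum, Finset.mul_sum]
      refine Finset.sum_congr rfl fun s _ => ?_
      rw [haentry j i]; ring
    have eF4 : (∑ s : Fin n, V x s * ((|(g x).det| ^ ((1:ℝ)/2))⁻¹ *
          (pd s (fun y => |(g y).det| ^ ((1:ℝ)/2)) x * (g x)⁻¹ i j)))
        = (|(g x).det| ^ ((1:ℝ)/2))⁻¹ * ((g x)⁻¹ i j *
            ∑ s : Fin n, V x s * pd s (fun y => |(g y).det| ^ ((1:ℝ)/2)) x) := by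
      rw [Finset.mul_sum, Finset.mul_sum]
      exact Finset.sum_congr rfl fun s _ => by ring
    have eF5 : (∑ s : Fin n, V x s * ((|(g x).det| ^ ((1:ℝ)/2))⁻¹ *
          (|(g x).det| ^ ((1:ℝ)/2) * pd s (fun z => (g z)⁻¹ j i) x)))
        = ∑ s : Fin n, V x s * pd s (fun z => (g z)⁻¹ i j) x := by
      refine Finset.sum_congr rfl fun s _ => ?_
      rw [hpdAsym s]
      linear_combination (V x s * pd s (fun z => (g z)⁻¹ i j) x) * hcr
    have eF6 : (∑ s : Fin n, V x s * ((|(g x).det| ^ ((1:ℝ)/2))⁻¹ *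
          (|(g x).det| ^ ((1:ℝ)/2) * pd s (fun z => (g z)⁻¹ i j) x)))
        = ∑ s : Fin n, V x s * pd s (fun z => (g z)⁻¹ i j) x := by
      refine Finset.sum_congr rfl fun s _ => ?_
      linear_combination (V x s * pd s (fun z => (g z)⁻¹ i j) x) * hcr
    rw [eA1, eA2, eA3, eA4, eF1, eF2, eF3, eF4, eF5, eF6] at heq
    linear_combination (1/2 : ℝ) * heq -
      ((∑ a : Fin n, (g x)⁻¹ a j * pd a (fun z => V z i) x) +
       (∑ a : Fin n, (g x)⁻¹ a i * pd a (fun z => V z j) x)) * hcr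

  -- differentiate g * g⁻¹ = 1
  have hF3 : ∀ ℓ : Fin n,
      (Matrix.of fun p q => pd ℓ (fun z => g z p q) x) * (g x)⁻¹ +
        g x * (Matrix.of fun p q => pd ℓ (fun z => (g z)⁻¹ p q) x) = 0 := by
    intro ℓ
    ext p q
    have hev : (fun y => ∑ s, g y p s * (g y)⁻¹ s q) =ᶠ[nhds x]
        (fun _ => if p = q then (1:ℝ) else 0) :=
      Filter.eventuallyEq_of_mem hUn fun y hy => hgA y hy p q
    have h0 : pd ℓ (fun y => ∑ s, g y p s * (g y)⁻¹ s q) x = 0 := by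
      rw [pd_congr_nhds hev, pd_const]
    rw [pd_sum (fun s _ => (cdtop_diff (hgc p s x hx)).fun_mul (cdtop_diff (hAc s q x hx)))] at h0
    have h1 : ∑ s : Fin n, (pd ℓ (fun z => g z p s) x * (g x)⁻¹ s q
        + g x p s * pd ℓ (fun z => (g z)⁻¹ s q) x) = 0 := by
      rw [← h0]
      exact Finset.sum_congr rfl fun s _ =>
        (pd_mul (cdtop_diff (hgc p s x hx)) (cdtop_diff (hAc s q x hx))).symm
    rw [Finset.sum_add_distrib] at h1
    simp only [Matrix.add_apply, Matrix.mul_apply, Matrix.of_apply, Matrix.zero_apply]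
    exact h1
  have := killing_algebra (g x) ((g x)⁻¹)
    (fun ℓ => Matrix.of fun p q => pd ℓ (fun z => g z p q) x)
    (fun ℓ => Matrix.of fun p q => pd ℓ (fun z => (g z)⁻¹ p q) x)
    (V x) (Matrix.of fun a s => pd a (fun z => V z s) x)
    (Matrix.mul_nonsing_inv _ (hg.nondeg x hx)) (Matrix.nonsing_inv_mul _ (hg.nondeg x hx))
    (hAsym x hx) hF3 hstar i0 j0
  simpa using this
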